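/- Let l0,l1 ∈ ℝ, s0,s1 > 0, and for θ ∈ (0,1) let m_θ(x) = (1−θ)·p_{l0,s0}(x) + θ·p_{l1,s1}(x). Define F(θ) = ∫_ℝ m_θ(x)·log m_θ(x) dx and η(θ) = ∫_ℝ (p_{l1,s1}(x) − p_{l0,s0}(x))·log m_θ(x) dx. Then for all θ1, θ2 ∈ (0,1), the Kullback–Leibler divergence between the mixtures equals the Bregman divergence of the negentropy: ∫_ℝ m_{θ1}(x)·log(m_{θ1}(x)/m_{θ2}(x)) dx = F(θ1) − F(θ2) − (θ1 − θ2)·η(θ2). -/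

import Mathlib

open MeasureTheory Real

/-- The Cauchy density with location `l` and scale `s`. -/
noncomputable def cauchyPdf (l s x : ℝ) : ℝ := s / (π * (s ^ 2 + (x - l) ^ 2))

/-- The Cauchy mixture density with components `p_{l0,s0}` and `p_{l1,s1}`. -/
noncomputable def cauchyMix (l0 s0 l1 s1 θ x : ℝ) : ℝ :=
  (1 - θ) * cauchyPdf l0 s0 x + θ * cauchyPdf l1 s1 x

lemma aux_quad_lb (l s : ℝ) (hs : 0 < s) (x : ℝ) :
    s^2/(2*(1+s^2+2*l^2)) * (1+x^2) ≤ s^2 + (x-l)^2 := by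
  rw [div_mul_eq_mul_div, div_le_iff₀ (by positivity)]
  nlinarith [sq_nonneg (s*(x-2*l)), sq_nonneg (x-l), mul_pos hs hs, sq_nonneg (l*(x-l)),
    sq_nonneg (s*l), sq_nonneg (s*(x-l)), sq_nonneg (l*s*(x-l))]

lemma aux_quad_ub (l s x : ℝ) : s^2 + (x-l)^2 ≤ (2+s^2+2*l^2)*(1+x^2) := by
  nlinarith [sq_nonneg (x+l), sq_nonneg (s*x), sq_nonneg (l*x)]

lemma cauchyPdf_pos (l s : ℝ) (hs : 0 < s) (x : ℝ) : 0 < cauchyPdf l s x := by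
  unfold cauchyPdf
  have := Real.pi_pos
  positivity

lemma cauchyPdf_continuous (l s : ℝ) (hs : 0 < s) : Continuous (cauchyPdf l s) := by
  unfold cauchyPdf
  refine continuous_const.div (by continuity) fun x => ?_
  have := Real.pi_pos
  positivity

lemma cauchyMix_pos (l0 s0 l1 s1 : ℝ) (hs0 : 0 < s0) (hs1 : 0 < s1) (θ : ℝ)
    (h0 : 0 < θ) (h1 : θ < 1) (x : ℝ) : 0 < cauchyMix l0 s0 l1 s1 θ x := by
  have p0 := cauchyPdf_pos l0 s0 hs0 x
  have p1 := cauchyPdf_pos l1 s1 hs1 x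
  unfold cauchyMix
  nlinarith

lemma cauchyMix_continuous (l0 s0 l1 s1 : ℝ) (hs0 : 0 < s0) (hs1 : 0 < s1) (θ : ℝ) :
    Continuous (cauchyMix l0 s0 l1 s1 θ) := by
  unfold cauchyMix
  exact (continuous_const.mul (cauchyPdf_continuous l0 s0 hs0)).add
    (continuous_const.mul (cauchyPdf_continuous l1 s1 hs1))

lemma cauchyPdf_le_inv (l s : ℝ) (hs : 0 < s) (x : ℝ) :
    cauchyPdf l s x ≤ (s / (π * (s^2/(2*(1+s^2+2*l^2))))) * (1+x^2)⁻¹ := by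
  have hπ := Real.pi_pos
  have hε : 0 < s^2/(2*(1+s^2+2*l^2)) := by positivity
  have h1 : cauchyPdf l s x ≤ s / (π * (s^2/(2*(1+s^2+2*l^2)) * (1+x^2))) := by
    unfold cauchyPdf
    gcongr
    exact aux_quad_lb l s hs x
  refine h1.trans_eq ?_
  have hπ' : π ≠ 0 := ne_of_gt hπ
  have hx' : (1+x^2 : ℝ) ≠ 0 := by positivity
  have hε' : (s^2/(2*(1+s^2+2*l^2)) : ℝ) ≠ 0 := ne_of_gt hε
  field_simp

lemma inv_le_cauchyPdf (l s : ℝ) (hs : 0 < s) (x : ℝ) :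
    (s / (π * (2+s^2+2*l^2))) * (1+x^2)⁻¹ ≤ cauchyPdf l s x := by
  have hπ := Real.pi_pos
  have h1 : s / (π * ((2+s^2+2*l^2) * (1+x^2))) ≤ cauchyPdf l s x := by
    unfold cauchyPdf
    gcongr
    exact aux_quad_ub l s x
  refine le_trans (le_of_eq ?_) h1
  have hπ' : π ≠ 0 := ne_of_gt hπ
  have hx' : (1+x^2 : ℝ) ≠ 0 := by positivity
  field_simp

lemma cauchyPdf_le_const (l s : ℝ) (hs : 0 < s) (x : ℝ) :
    cauchyPdf l s x ≤ 1 / (π * s) := by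
  have hπ := Real.pi_pos
  have h1 : cauchyPdf l s x ≤ s / (π * s^2) := by
    unfold cauchyPdf
    gcongr
    nlinarith [sq_nonneg (x-l)]
  refine h1.trans_eq ?_
  rw [pow_two]
  field_simp

lemma integrable_pdf_mul_log_mix (l0 l1 s0 s1 l s θ : ℝ)
    (hs0 : 0 < s0) (hs1 : 0 < s1) (hs : 0 < s) (h0 : 0 < θ) (h1 : θ < 1) :
    Integrable (fun x => cauchyPdf l s x * Real.log (cauchyMix l0 s0 l1 s1 θ x)) := by
  have hπ := Real.pi_pos
  set C : ℝ := s / (π * (s^2/(2*(1+s^2+2*l^2)))) with hC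
  have hCpos : 0 < C := by positivity
  set c0 : ℝ := (1-θ) * (s0 / (π * (2+s0^2+2*l0^2))) with hc0
  have hc0pos : 0 < c0 := by
    have : 0 < 1 - θ := by linarith
    positivity
  set M : ℝ := 1/(π*s0) + 1/(π*s1) with hM
  have hMpos : 0 < M := by positivity
  set A : ℝ := |Real.log M| + |Real.log c0| with hA
  have hAnn : 0 ≤ A := by positivity
  -- pointwise bound on |log mix|
  have hlogbound : ∀ x : ℝ, |Real.log (cauchyMix l0 s0 l1 s1 θ x)| ≤ A + Real.log (1+x^2) := by
    intro x
    have hmpos := cauchyMix_pos l0 s0 l1 s1 hs0 hs1 θ h0 h1 x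
    have hL : 0 ≤ Real.log (1+x^2) := Real.log_nonneg (by nlinarith [sq_nonneg x])
    rw [abs_le]
    constructor
    · -- lower bound: mix ≥ c0 * (1+x²)⁻¹
      have hlb : c0 * (1+x^2)⁻¹ ≤ cauchyMix l0 s0 l1 s1 θ x := by
        have h2 := inv_le_cauchyPdf l0 s0 hs0 x
        have p1 := cauchyPdf_pos l1 s1 hs1 x
        have h3 : c0 * (1+x^2)⁻¹ = (1-θ) * ((s0 / (π * (2+s0^2+2*l0^2))) * (1+x^2)⁻¹) := by
          rw [hc0]; ring
        rw [h3]
        unfold cauchyMix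
        have h1θ : 0 < 1 - θ := by linarith
        nlinarith [mul_le_mul_of_nonneg_left h2 h1θ.le]
      have hlog1 : Real.log (c0 * (1+x^2)⁻¹) ≤ Real.log (cauchyMix l0 s0 l1 s1 θ x) :=
        Real.log_le_log (by positivity) hlb
      have hlog2 : Real.log (c0 * (1+x^2)⁻¹) = Real.log c0 - Real.log (1+x^2) := by
        rw [Real.log_mul (ne_of_gt hc0pos) (by positivity), Real.log_inv]
        ring
      have := abs_nonneg (Real.log M)
      have h5 : -|Real.log c0| ≤ Real.log c0 := neg_abs_le _
      linarith [hlog2 ▸ hlog1]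
    · -- upper bound: mix ≤ M
      have hub : cauchyMix l0 s0 l1 s1 θ x ≤ M := by
        have h2 := cauchyPdf_le_const l0 s0 hs0 x
        have h3 := cauchyPdf_le_const l1 s1 hs1 x
        have p0 := cauchyPdf_pos l0 s0 hs0 x
        have p1 := cauchyPdf_pos l1 s1 hs1 x
        unfold cauchyMix
        rw [hM]
        nlinarith
      have := Real.log_le_log (cauchyMix_pos l0 s0 l1 s1 hs0 hs1 θ h0 h1 x) hub
      have h6 : Real.log M ≤ |Real.log M| := le_abs_self _
      have h7 := abs_nonneg (Real.log c0)
      linarith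
  -- dominating function
  have hdom : Integrable (fun x : ℝ => A * C * (1+x^2)⁻¹ + 4 * C * (1+x^2) ^ (-(3/4) : ℝ)) := by
    refine ((integrable_inv_one_add_sq.const_mul (A*C)).add ?_)
    have h34 : Integrable (fun x : ℝ => (1 + x^2) ^ (-(3/4) : ℝ)) := by
      have := integrable_rpow_neg_one_add_norm_sq (E := ℝ) (μ := volume) (r := 3/2)
        (by norm_num [Module.finrank_self])
      have h : (-(3/2)/2 : ℝ) = (-(3/4) : ℝ) := by norm_num
      simpa [Real.norm_eq_abs, sq_abs, h] using this
    exact h34.const_mul _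
  refine hdom.mono' ?_ (Filter.Eventually.of_forall fun x => ?_)
  · exact ((cauchyPdf_continuous l s hs).mul
      ((cauchyMix_continuous l0 s0 l1 s1 hs0 hs1 θ).log
        fun x => ne_of_gt (cauchyMix_pos l0 s0 l1 s1 hs0 hs1 θ h0 h1 x))).aestronglyMeasurable
  · have hppos := cauchyPdf_pos l s hs x
    have hple := cauchyPdf_le_inv l s hs x
    have hxinv : (0:ℝ) < (1+x^2)⁻¹ := by positivity
    have hlb := hlogbound x
    have step1 : ‖cauchyPdf l s x * Real.log (cauchyMix l0 s0 l1 s1 θ x)‖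
        ≤ C * (1+x^2)⁻¹ * (A + Real.log (1+x^2)) := by
      rw [norm_mul, Real.norm_eq_abs, Real.norm_eq_abs, abs_of_pos hppos]
      have h7 : 0 ≤ A + Real.log (1 + x ^ 2) := le_trans (abs_nonneg _) hlb
      calc cauchyPdf l s x * |Real.log (cauchyMix l0 s0 l1 s1 θ x)|
          ≤ (C * (1+x^2)⁻¹) * (A + Real.log (1+x^2)) :=
            mul_le_mul hple hlb (abs_nonneg _) (by positivity)
        _ = C * (1+x^2)⁻¹ * (A + Real.log (1+x^2)) := by ring
    refine step1.trans ?_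
    -- C(1+x²)⁻¹(A + log(1+x²)) ≤ AC(1+x²)⁻¹ + 4C(1+x²)^(-3/4)
    have hy : (1:ℝ) ≤ 1 + x^2 := by nlinarith [sq_nonneg x]
    have hy0 : (0:ℝ) < 1 + x^2 := by linarith
    have hlog4 : Real.log (1+x^2) ≤ 4 * (1+x^2) ^ ((1:ℝ)/4) := by
      have h : Real.log ((1+x^2) ^ ((1:ℝ)/4)) = (1/4) * Real.log (1+x^2) :=
        Real.log_rpow hy0 _
      have h2 := Real.log_le_sub_one_of_pos (show (0:ℝ) < (1+x^2) ^ ((1:ℝ)/4) by positivity)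
      nlinarith [Real.rpow_nonneg hy0.le ((1:ℝ)/4)]
    have hkey : (1+x^2) ^ ((1:ℝ)/4) * (1+x^2)⁻¹ = (1+x^2) ^ (-(3/4) : ℝ) := by
      rw [← Real.rpow_neg_one (1+x^2), ← Real.rpow_add hy0]
      norm_num
    have : C * (1+x^2)⁻¹ * (A + Real.log (1+x^2))
        = A * C * (1+x^2)⁻¹ + C * (Real.log (1+x^2) * (1+x^2)⁻¹) := by ring
    rw [this]
    gcongr ?_ + ?_
    · exact le_refl _
    · calc C * (Real.log (1+x^2) * (1+x^2)⁻¹)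
          ≤ C * ((4 * (1+x^2) ^ ((1:ℝ)/4)) * (1+x^2)⁻¹) := by
            have := mul_le_mul_of_nonneg_right hlog4 hxinv.le
            exact mul_le_mul_of_nonneg_left this hCpos.le
        _ = 4 * C * ((1+x^2) ^ ((1:ℝ)/4) * (1+x^2)⁻¹) := by ring
        _ = 4 * C * (1+x^2) ^ (-(3/4) : ℝ) := by rw [hkey]

/-- The Kullback–Leibler divergence between two Cauchy mixtures equals the Bregman
divergence of the negentropy generator. -/
theorem kl_eq_bregman (l0 l1 s0 s1 : ℝ) (hs0 : 0 < s0) (hs1 : 0 < s1)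
    (F η : ℝ → ℝ)
    (hF : F = fun θ => ∫ x : ℝ, cauchyMix l0 s0 l1 s1 θ x *
      Real.log (cauchyMix l0 s0 l1 s1 θ x))
    (hη : η = fun θ => ∫ x : ℝ, (cauchyPdf l1 s1 x - cauchyPdf l0 s0 x) *
      Real.log (cauchyMix l0 s0 l1 s1 θ x))
    (θ1 θ2 : ℝ) (hθ1 : θ1 ∈ Set.Ioo (0 : ℝ) 1) (hθ2 : θ2 ∈ Set.Ioo (0 : ℝ) 1) :
    ∫ x : ℝ, cauchyMix l0 s0 l1 s1 θ1 x *
        Real.log (cauchyMix l0 s0 l1 s1 θ1 x / cauchyMix l0 s0 l1 s1 θ2 x) =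
      F θ1 - F θ2 - (θ1 - θ2) * η θ2 := by
  obtain ⟨h10, h11⟩ := hθ1
  obtain ⟨h20, h21⟩ := hθ2
  have ip0 := integrable_pdf_mul_log_mix l0 l1 s0 s1 l0 s0 θ2 hs0 hs1 hs0 h20 h21
  have ip1 := integrable_pdf_mul_log_mix l0 l1 s0 s1 l1 s1 θ2 hs0 hs1 hs1 h20 h21
  set I0 := ∫ x : ℝ, cauchyPdf l0 s0 x * Real.log (cauchyMix l0 s0 l1 s1 θ2 x) with hI0
  set I1 := ∫ x : ℝ, cauchyPdf l1 s1 x * Real.log (cauchyMix l0 s0 l1 s1 θ2 x) with hI1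
  have imix : ∀ θ θ' : ℝ, 0 < θ' → θ' < 1 →
      Integrable (fun x => cauchyMix l0 s0 l1 s1 θ x *
        Real.log (cauchyMix l0 s0 l1 s1 θ' x)) := by
    intro θ θ' ha hb
    have h := ((integrable_pdf_mul_log_mix l0 l1 s0 s1 l0 s0 θ' hs0 hs1 hs0 ha hb).const_mul
      (1-θ)).add ((integrable_pdf_mul_log_mix l0 l1 s0 s1 l1 s1 θ' hs0 hs1 hs1 ha hb).const_mul θ)
    exact h.congr (Filter.Eventually.of_forall fun x => by simp only [Pi.add_apply]; unfold cauchyMix; ring)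
  have hmixint : ∀ θ : ℝ, (∫ x : ℝ, cauchyMix l0 s0 l1 s1 θ x *
      Real.log (cauchyMix l0 s0 l1 s1 θ2 x)) = (1-θ) * I0 + θ * I1 := by
    intro θ
    have heq : ∀ x : ℝ, cauchyMix l0 s0 l1 s1 θ x * Real.log (cauchyMix l0 s0 l1 s1 θ2 x)
        = (1-θ) * (cauchyPdf l0 s0 x * Real.log (cauchyMix l0 s0 l1 s1 θ2 x))
          + θ * (cauchyPdf l1 s1 x * Real.log (cauchyMix l0 s0 l1 s1 θ2 x)) := fun x => by
      unfold cauchyMix; ring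
    simp only [heq]
    rw [integral_add (ip0.const_mul _) (ip1.const_mul _), integral_const_mul,
      integral_const_mul]
  have hEta : η θ2 = I1 - I0 := by
    rw [hη]
    simp only
    have heq : ∀ x : ℝ, (cauchyPdf l1 s1 x - cauchyPdf l0 s0 x) *
        Real.log (cauchyMix l0 s0 l1 s1 θ2 x)
        = cauchyPdf l1 s1 x * Real.log (cauchyMix l0 s0 l1 s1 θ2 x)
          - cauchyPdf l0 s0 x * Real.log (cauchyMix l0 s0 l1 s1 θ2 x) := fun x => by ring
    simp only [heq]
    rw [integral_sub ip1 ip0]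
  have hF2 : F θ2 = (1-θ2) * I0 + θ2 * I1 := by rw [hF]; exact hmixint θ2
  have hsplit : ∀ x : ℝ, cauchyMix l0 s0 l1 s1 θ1 x *
      Real.log (cauchyMix l0 s0 l1 s1 θ1 x / cauchyMix l0 s0 l1 s1 θ2 x)
      = cauchyMix l0 s0 l1 s1 θ1 x * Real.log (cauchyMix l0 s0 l1 s1 θ1 x)
        - cauchyMix l0 s0 l1 s1 θ1 x * Real.log (cauchyMix l0 s0 l1 s1 θ2 x) := by
    intro x
    rw [Real.log_div (ne_of_gt (cauchyMix_pos l0 s0 l1 s1 hs0 hs1 θ1 h10 h11 x))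
      (ne_of_gt (cauchyMix_pos l0 s0 l1 s1 hs0 hs1 θ2 h20 h21 x))]
    ring
  have hF1 : F θ1 = ∫ x : ℝ, cauchyMix l0 s0 l1 s1 θ1 x *
      Real.log (cauchyMix l0 s0 l1 s1 θ1 x) := by rw [hF]
  simp only [hsplit]
  rw [integral_sub (imix θ1 θ1 h10 h11) (imix θ1 θ2 h20 h21), hmixint θ1, hF1, hF2, hEta]
  ring
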